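/- Let Θ ⊆ ℝ^i and Θ̃ ⊆ ℝ^j be open sets, let g : Θ̃ → Θ be twice differentiable with surjective Jacobian at every point, let f : Θ → ℝ be twice continuously differentiable, and set f̃ = f ∘ g. Suppose θ̃ ∈ Θ̃ is such that ∇f(g(θ̃)) = 0 and there exists v ∈ ℝ^i with vᵀ ∇²f(g(θ̃)) v < 0. Then there exists ṽ ∈ ℝ^j with ṽᵀ ∇²f̃(θ̃) ṽ < 0; specifically, ṽ = Aᵀv works for any left inverse A of the transposed Jacobian ∇g(θ̃). -/

import Mathlib

open Set Topology

/-- Negative-curvature direction transfer: if `∇f(g θ̃) = 0` and `f` has a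
direction `v` of strictly negative curvature at `g θ̃`, then `f̃ = f ∘ g` has a
direction `ṽ` of strictly negative curvature at `θ̃`; specifically, `ṽ = Aᵀv`
works for any left inverse `A` of the transposed Jacobian `∇g(θ̃)`, equivalently
`ṽ = B v` works for any right inverse `B = Aᵀ` of the Jacobian `Dg(θ̃)`. -/
theorem negative_curvature_direction_of_comp
    (i j : ℕ)
    (Θ : Set (EuclideanSpace ℝ (Fin i))) (Θt : Set (EuclideanSpace ℝ (Fin j)))
    (hΘ : IsOpen Θ) (hΘt : IsOpen Θt)
    (g : EuclideanSpace ℝ (Fin j) → EuclideanSpace ℝ (Fin i))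
    (hmaps : MapsTo g Θt Θ)
    (hg1 : ∀ x ∈ Θt, DifferentiableAt ℝ g x)
    (hg2 : ∀ x ∈ Θt, DifferentiableAt ℝ (fderiv ℝ g) x)
    (hsub : ∀ x ∈ Θt, Function.Surjective (fderiv ℝ g x))
    (f : EuclideanSpace ℝ (Fin i) → ℝ)
    (hf : ContDiffOn ℝ 2 f Θ)
    (θt : EuclideanSpace ℝ (Fin j)) (hθt : θt ∈ Θt)
    (hcrit : fderiv ℝ f (g θt) = 0)
    (v : EuclideanSpace ℝ (Fin i))
    (hv : iteratedFDeriv ℝ 2 f (g θt) ![v, v] < 0) :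
    (∃ vt : EuclideanSpace ℝ (Fin j), iteratedFDeriv ℝ 2 (f ∘ g) θt ![vt, vt] < 0) ∧
    ∀ B : EuclideanSpace ℝ (Fin i) →L[ℝ] EuclideanSpace ℝ (Fin j),
      (fderiv ℝ g θt).comp B = ContinuousLinearMap.id ℝ (EuclideanSpace ℝ (Fin i)) →
      iteratedFDeriv ℝ 2 (f ∘ g) θt ![B v, B v] < 0 := by
  set x₀ := g θt with hx₀
  have hx₀Θ : x₀ ∈ Θ := hmaps hθt
  have hfc2 : ContDiffAt ℝ 2 f x₀ := hf.contDiffAt (hΘ.mem_nhds hx₀Θ)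
  have hf' : DifferentiableAt ℝ (fderiv ℝ f) x₀ :=
    (hfc2.fderiv_right (m := 1) le_rfl).differentiableAt one_ne_zero
  -- the first derivative of f ∘ g agrees with the chain rule on Θt
  have hEq : ∀ x ∈ Θt, fderiv ℝ (f ∘ g) x = (fderiv ℝ f (g x)).comp (fderiv ℝ g x) := by
    intro x hx
    exact fderiv_comp x ((hf.contDiffAt (hΘ.mem_nhds (hmaps hx))).differentiableAt
      (by norm_num)) (hg1 x hx)
  have hEv : fderiv ℝ (f ∘ g) =ᶠ[nhds θt] fun x => (fderiv ℝ f (g x)).comp (fderiv ℝ g x) := by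
    filter_upwards [hΘt.mem_nhds hθt] with x hx using hEq x hx
  -- compute the second derivative of f ∘ g at θt
  set Dg := fderiv ℝ g θt with hDg
  set H := fderiv ℝ (fderiv ℝ f) x₀ with hH
  have hA : HasFDerivAt (fun x => fderiv ℝ f (g x)) (H.comp Dg) θt :=
    HasFDerivAt.comp θt hf'.hasFDerivAt (hg1 θt hθt).hasFDerivAt
  have hB : HasFDerivAt (fderiv ℝ g) (fderiv ℝ (fderiv ℝ g) θt) θt :=
    (hg2 θt hθt).hasFDerivAt
  have hC := hA.clm_comp hB
  have hfd : fderiv ℝ (fderiv ℝ (f ∘ g)) θt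
      = ((ContinuousLinearMap.compL ℝ (EuclideanSpace ℝ (Fin j)) (EuclideanSpace ℝ (Fin i)) ℝ
          (fderiv ℝ f x₀)).comp (fderiv ℝ (fderiv ℝ g) θt)
        + ((ContinuousLinearMap.compL ℝ (EuclideanSpace ℝ (Fin j)) (EuclideanSpace ℝ (Fin i)) ℝ).flip
          Dg).comp (H.comp Dg)) := by
    rw [hEv.fderiv_eq]
    exact hC.fderiv
  have key : ∀ w : EuclideanSpace ℝ (Fin j),
      iteratedFDeriv ℝ 2 (f ∘ g) θt ![w, w] = H (Dg w) (Dg w) := by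
    intro w
    rw [iteratedFDeriv_two_apply, hfd]
    simp [hcrit, ← hx₀]
  have hv' : H v v < 0 := by
    rw [iteratedFDeriv_two_apply] at hv
    simpa [← hH] using hv
  have main : ∀ B : EuclideanSpace ℝ (Fin i) →L[ℝ] EuclideanSpace ℝ (Fin j),
      (fderiv ℝ g θt).comp B = ContinuousLinearMap.id ℝ (EuclideanSpace ℝ (Fin i)) →
      iteratedFDeriv ℝ 2 (f ∘ g) θt ![B v, B v] < 0 := by
    intro B hBinv
    have hDgB : Dg (B v) = v := by
      have := congrArg (fun L => L v) hBinv
      simpa using this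
    rw [key, hDgB]
    exact hv'
  refine ⟨?_, main⟩
  -- construct a right inverse of Dg
  obtain ⟨B₀, hB₀⟩ := (Dg : EuclideanSpace ℝ (Fin j) →ₗ[ℝ]
      EuclideanSpace ℝ (Fin i)).exists_rightInverse_of_surjective
    (LinearMap.range_eq_top.mpr (hsub θt hθt))
  set B : EuclideanSpace ℝ (Fin i) →L[ℝ] EuclideanSpace ℝ (Fin j) :=
    LinearMap.toContinuousLinearMap B₀ with hBdef
  have hBinv : (fderiv ℝ g θt).comp B = ContinuousLinearMap.id ℝ (EuclideanSpace ℝ (Fin i)) := by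
    refine ContinuousLinearMap.ext fun w => ?_
    simpa [hBdef] using congrArg (fun L => L w) hB₀
  exact ⟨B v, main B hBinv⟩
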